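/- Optimality of the pure-state quantum model among two-state pure models: among all pairs of pure qubit states (|ψ₀⟩, |ψ₁⟩) with fixed mixing probabilities (p₀, p₁) and overlap constrained by |⟨ψ₀|ψ₁⟩| ≤ F_max, the von Neumann entropy S(p₀|ψ₀⟩⟨ψ₀| + p₁|ψ₁⟩⟨ψ₁|) is minimized exactly when |⟨ψ₀|ψ₁⟩| = F_max. -/

import Mathlib

open Real


open scoped Matrix ComplexOrder

/-- Square root of a Hermitian matrix via the spectral theorem (junk value `0` otherwise). -/
noncomputable def msqrt {n : ℕ} (A : Matrix (Fin n) (Fin n) ℂ) : Matrix (Fin n) (Fin n) ℂ :=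
  if h : A.IsHermitian then
    (h.eigenvectorUnitary : Matrix (Fin n) (Fin n) ℂ) *
      Matrix.diagonal (fun i => (Real.sqrt (h.eigenvalues i) : ℂ)) *
      (h.eigenvectorUnitary : Matrix (Fin n) (Fin n) ℂ)ᴴ
  else 0

/-- Quantum fidelity `F(ρ,σ) = Tr √(√ρ σ √ρ)`. -/
noncomputable def fidelity {n : ℕ} (ρ σ : Matrix (Fin n) (Fin n) ℂ) : ℝ :=
  (msqrt (msqrt ρ * σ * msqrt ρ)).trace.re

/-- Von Neumann entropy `S(ρ) = -Tr(ρ log ρ)` via eigenvalues (junk value `0` if not Hermitian);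
note `Real.log 0 = 0` so `0 log 0 = 0`. -/
noncomputable def vnEntropy {n : ℕ} (ρ : Matrix (Fin n) (Fin n) ℂ) : ℝ :=
  if h : ρ.IsHermitian then -∑ i, (h.eigenvalues i) * Real.log (h.eigenvalues i) else 0

/-- Outer product `|ψ⟩⟨ψ|`. -/
noncomputable def proj {n : ℕ} (ψ : Fin n → ℂ) : Matrix (Fin n) (Fin n) ℂ :=
  Matrix.of fun i j => ψ i * star (ψ j)

/-- Inner product `⟨ψ|φ⟩`. -/
noncomputable def qInner {n : ℕ} (ψ φ : Fin n → ℂ) : ℂ := ∑ i, star (ψ i) * φ i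

noncomputable def entd (d : ℝ) : ℝ :=
  negMulLog ((1 + Real.sqrt (1 - 4*d))/2) + negMulLog ((1 - Real.sqrt (1 - 4*d))/2)

lemma pair_eq' {a b : ℝ} (ha : 0 ≤ a) (hb : 0 ≤ b) (hs : a + b = 1) :
    negMulLog a + negMulLog b = entd (a*b) := by
  have key : ∀ a b : ℝ, 0 ≤ b → a + b = 1 → b ≤ a →
      negMulLog a + negMulLog b = entd (a*b) := by
    intro a b hb hs hba
    have hsq : Real.sqrt (1 - 4*(a*b)) = a - b := by
      rw [show 1 - 4*(a*b) = (a-b)^2 by nlinarith]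
      rw [Real.sqrt_sq (by linarith)]
    unfold entd
    rw [hsq, show (1 + (a-b))/2 = a by linarith, show (1 - (a-b))/2 = b by linarith]
  rcases le_total b a with h | h
  · exact key a b hb hs h
  · rw [add_comm (negMulLog a), mul_comm]; exact key b a ha (by linarith) h

lemma Hanti' {a b : ℝ} (ha : 1/2 ≤ a) (hab : a < b) (hb : b ≤ 1) :
    negMulLog b + negMulLog (1-b) < negMulLog a + negMulLog (1-a) := by
  have hb2 : 1/2 < b := lt_of_le_of_lt ha hab
  have hden : 0 < 2*b - 1 := by linarith
  have h1b : 1 - b < a := by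
    rcases lt_or_eq_of_le (show 1 - b ≤ a by linarith) with h | h
    · exact h
    · exfalso; linarith
  have htpos : 0 < (b - a)/(2*b - 1) := div_pos (by linarith) hden
  have hspos : 0 < (a - (1-b))/(2*b - 1) := div_pos (by linarith) hden
  have hts : (b - a)/(2*b - 1) + (a - (1-b))/(2*b - 1) = 1 := by
    rw [← add_div, div_eq_iff hden.ne']; ring
  have hmem1 : (1-b) ∈ Set.Ici (0:ℝ) := Set.mem_Ici.mpr (by linarith)
  have hmem2 : b ∈ Set.Ici (0:ℝ) := Set.mem_Ici.mpr (by linarith)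
  have hne : (1-b) ≠ b := by intro h; linarith
  have c1 := strictConcaveOn_negMulLog.2 hmem1 hmem2 hne htpos hspos hts
  have c2 := strictConcaveOn_negMulLog.2 hmem2 hmem1 (Ne.symm hne) htpos hspos hts
  simp only [smul_eq_mul] at c1 c2
  have e1 : (b - a)/(2*b - 1) * (1-b) + (a - (1-b))/(2*b - 1) * b = a := by
    rw [div_mul_eq_mul_div, div_mul_eq_mul_div, ← add_div, div_eq_iff hden.ne']; ring
  have e2 : (b - a)/(2*b - 1) * b + (a - (1-b))/(2*b - 1) * (1-b) = 1 - a := by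
    rw [div_mul_eq_mul_div, div_mul_eq_mul_div, ← add_div, div_eq_iff hden.ne']; ring
  rw [e1] at c1
  rw [e2] at c2
  have hx := add_lt_add c1 c2
  have hrw : (b - a)/(2*b - 1) * negMulLog (1-b) + (a - (1-b))/(2*b - 1) * negMulLog b
      + ((b - a)/(2*b - 1) * negMulLog b + (a - (1-b))/(2*b - 1) * negMulLog (1-b))
      = negMulLog b + negMulLog (1-b) := by
    linear_combination (negMulLog b + negMulLog (1-b)) * hts
  linarith

lemma entd_strictMono' {d₁ d₂ : ℝ} (h0 : 0 ≤ d₁) (h12 : d₁ < d₂) (h2 : d₂ ≤ 1/4) :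
    entd d₁ < entd d₂ := by
  have ht2nn : 0 ≤ Real.sqrt (1 - 4*d₂) := Real.sqrt_nonneg _
  have htlt : Real.sqrt (1 - 4*d₂) < Real.sqrt (1 - 4*d₁) :=
    Real.sqrt_lt_sqrt (by linarith) (by linarith)
  have ht1le : Real.sqrt (1 - 4*d₁) ≤ 1 := by
    have h := Real.sqrt_le_sqrt (show 1 - 4*d₁ ≤ 1 by linarith)
    simpa using h
  have h := Hanti' (a := (1 + Real.sqrt (1 - 4*d₂))/2) (b := (1 + Real.sqrt (1 - 4*d₁))/2)
    (by linarith) (by linarith) (by linarith)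
  unfold entd
  convert h using 3 <;> ring

lemma projHerm' {n : ℕ} (ψ : Fin n → ℂ) (c : ℝ) : ((c:ℂ) • proj ψ).IsHermitian := by
  ext i j
  simp only [proj, Matrix.conjTranspose_apply, Matrix.smul_apply, Matrix.of_apply, star_mul',
    star_star, smul_eq_mul, Complex.star_def, Complex.conj_ofReal, Complex.conj_conj]
  ring

lemma trace_eq_sum_eigs {n : ℕ} {A : Matrix (Fin n) (Fin n) ℂ} (h : A.IsHermitian) :
    A.trace = ∑ i, (h.eigenvalues i : ℂ) := by
  exact h.trace_eq_sum_eigenvalues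

lemma mix_psd (p₀ p₁ : ℝ) (hp₀ : 0 ≤ p₀) (hp₁ : 0 ≤ p₁) (ψ₀ ψ₁ : Fin 2 → ℂ) :
    ((p₀ : ℂ) • proj ψ₀ + (p₁ : ℂ) • proj ψ₁).PosSemidef := by
  refine Matrix.posSemidef_iff_dotProduct_mulVec.mpr ⟨(projHerm' ψ₀ p₀).add (projHerm' ψ₁ p₁), fun x => ?_⟩
  have key : dotProduct (star x) (((p₀ : ℂ) • proj ψ₀ + (p₁ : ℂ) • proj ψ₁) *ᵥ x)
      = (p₀:ℂ) * (star (qInner ψ₀ x) * qInner ψ₀ x)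
        + (p₁:ℂ) * (star (qInner ψ₁ x) * qInner ψ₁ x) := by
    simp only [dotProduct, Matrix.mulVec, dotProduct, Fin.sum_univ_two,
      Matrix.add_apply, Matrix.smul_apply, Matrix.of_apply, proj, qInner, smul_eq_mul,
      Pi.star_apply, star_add, star_mul', star_star]
    ring
  rw [key]
  have h0 : (0:ℂ) ≤ (p₀:ℂ) := by exact_mod_cast Complex.real_le_real.mpr hp₀
  have h1 : (0:ℂ) ≤ (p₁:ℂ) := by exact_mod_cast Complex.real_le_real.mpr hp₁
  exact add_nonneg (mul_nonneg h0 (star_mul_self_nonneg _))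
    (mul_nonneg h1 (star_mul_self_nonneg _))

lemma mix_trace (p₀ p₁ : ℝ) (hsum : p₀ + p₁ = 1) (ψ₀ ψ₁ : Fin 2 → ℂ)
    (huψ₀ : qInner ψ₀ ψ₀ = 1) (huψ₁ : qInner ψ₁ ψ₁ = 1) :
    ((p₀ : ℂ) • proj ψ₀ + (p₁ : ℂ) • proj ψ₁).trace = 1 := by
  simp only [qInner, Fin.sum_univ_two] at huψ₀ huψ₁
  simp only [Matrix.trace, Matrix.diag, proj, Fin.sum_univ_two, Matrix.add_apply,
    Matrix.smul_apply, Matrix.of_apply, smul_eq_mul]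
  have h1 : (p₀ : ℂ) + p₁ = 1 := by exact_mod_cast congrArg Complex.ofReal hsum
  linear_combination (p₀:ℂ) * huψ₀ + (p₁:ℂ) * huψ₁ + h1

lemma mix_det (p₀ p₁ : ℝ) (ψ₀ ψ₁ : Fin 2 → ℂ)
    (huψ₀ : qInner ψ₀ ψ₀ = 1) (huψ₁ : qInner ψ₁ ψ₁ = 1) :
    ((p₀ : ℂ) • proj ψ₀ + (p₁ : ℂ) • proj ψ₁).det
      = ((p₀ * p₁ * (1 - (‖qInner ψ₀ ψ₁‖)^2) : ℝ) : ℂ) := by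
  have hz : ((‖qInner ψ₀ ψ₁‖ : ℂ))^2
      = qInner ψ₀ ψ₁ * star (qInner ψ₀ ψ₁) := by
    rw [Complex.star_def, Complex.mul_conj, ← Complex.sq_norm]
    push_cast; ring
  push_cast
  rw [hz]
  simp only [qInner, Fin.sum_univ_two, star_add, star_mul', star_star] at huψ₀ huψ₁ ⊢
  rw [Matrix.det_fin_two]
  simp only [Matrix.add_apply, Matrix.smul_apply, Matrix.of_apply, proj, smul_eq_mul]
  linear_combination ((p₀:ℂ)*p₁*(star (ψ₁ 0) * ψ₁ 0 + star (ψ₁ 1) * ψ₁ 1)) * huψ₀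
    + (p₀:ℂ)*p₁ * huψ₁

lemma vn_eq_entd (p₀ p₁ : ℝ) (hp₀ : 0 ≤ p₀) (hp₁ : 0 ≤ p₁) (hsum : p₀ + p₁ = 1)
    (ψ₀ ψ₁ : Fin 2 → ℂ) (huψ₀ : qInner ψ₀ ψ₀ = 1) (huψ₁ : qInner ψ₁ ψ₁ = 1) :
    vnEntropy ((p₀ : ℂ) • proj ψ₀ + (p₁ : ℂ) • proj ψ₁)
      = entd (p₀ * p₁ * (1 - (‖qInner ψ₀ ψ₁‖)^2)) := by
  have hpsd := mix_psd p₀ p₁ hp₀ hp₁ ψ₀ ψ₁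
  have h : ((p₀ : ℂ) • proj ψ₀ + (p₁ : ℂ) • proj ψ₁).IsHermitian := hpsd.1
  rw [vnEntropy, dif_pos h]
  have hnn : ∀ i, 0 ≤ h.eigenvalues i := fun i => hpsd.eigenvalues_nonneg i
  have hsum2 : h.eigenvalues 0 + h.eigenvalues 1 = 1 := by
    have h2 := (trace_eq_sum_eigs h).symm.trans (mix_trace p₀ p₁ hsum ψ₀ ψ₁ huψ₀ huψ₁)
    rw [Fin.sum_univ_two] at h2
    exact_mod_cast h2
  have hprod : h.eigenvalues 0 * h.eigenvalues 1
      = p₀ * p₁ * (1 - (‖qInner ψ₀ ψ₁‖)^2) := by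
    have h2 := (h.det_eq_prod_eigenvalues).symm.trans (mix_det p₀ p₁ ψ₀ ψ₁ huψ₀ huψ₁)
    rw [Fin.prod_univ_two] at h2
    simpa [← Complex.ofReal_pow] using congrArg Complex.re h2
  rw [Fin.sum_univ_two]
  have h3 := pair_eq' (hnn 0) (hnn 1) hsum2
  rw [hprod] at h3
  rw [← h3]
  simp only [Real.negMulLog]
  ring

/-- Optimality among two-state pure models: with fixed mixing probabilities `p₀, p₁ > 0`,
`p₀ + p₁ = 1`, and `F_max ∈ [0,1)`, among all pairs of pure qubit states whose overlap is
constrained by `|⟨ψ₀|ψ₁⟩| ≤ F_max`, the entropy `S(p₀|ψ₀⟩⟨ψ₀| + p₁|ψ₁⟩⟨ψ₁|)` is minimized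
exactly by the pairs with `|⟨ψ₀|ψ₁⟩| = F_max`. -/
theorem pure_model_optimal_at_max_fidelity (p₀ p₁ : ℝ) (hp₀ : 0 < p₀) (hp₁ : 0 < p₁)
    (hsum : p₀ + p₁ = 1) (Fmax : ℝ) (hFmax : Fmax ∈ Set.Ico (0:ℝ) 1)
    (ψ₀ ψ₁ φ₀ φ₁ : Fin 2 → ℂ)
    (huψ₀ : qInner ψ₀ ψ₀ = 1) (huψ₁ : qInner ψ₁ ψ₁ = 1)
    (huφ₀ : qInner φ₀ φ₀ = 1) (huφ₁ : qInner φ₁ φ₁ = 1)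
    (hψ : ‖qInner ψ₀ ψ₁‖ ≤ Fmax)
    (hφ : ‖qInner φ₀ φ₁‖ = Fmax) :
    vnEntropy ((p₀ : ℂ) • proj φ₀ + (p₁ : ℂ) • proj φ₁)
        ≤ vnEntropy ((p₀ : ℂ) • proj ψ₀ + (p₁ : ℂ) • proj ψ₁) ∧
      (vnEntropy ((p₀ : ℂ) • proj ψ₀ + (p₁ : ℂ) • proj ψ₁)
          = vnEntropy ((p₀ : ℂ) • proj φ₀ + (p₁ : ℂ) • proj φ₁) ↔
        ‖qInner ψ₀ ψ₁‖ = Fmax) := by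
  have hFψnn : 0 ≤ ‖qInner ψ₀ ψ₁‖ := norm_nonneg _
  have hFmaxlt : Fmax < 1 := hFmax.2
  have hFmaxnn : 0 ≤ Fmax := hFmax.1
  have hpp : p₀ * p₁ ≤ 1/4 := by nlinarith [sq_nonneg (p₀ - p₁)]
  have hppos : 0 < p₀ * p₁ := mul_pos hp₀ hp₁
  have hEψ := vn_eq_entd p₀ p₁ hp₀.le hp₁.le hsum ψ₀ ψ₁ huψ₀ huψ₁
  have hEφ := vn_eq_entd p₀ p₁ hp₀.le hp₁.le hsum φ₀ φ₁ huφ₀ huφ₁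
  rw [hφ] at hEφ
  rw [hEψ, hEφ]
  have hdφ0 : 0 ≤ p₀ * p₁ * (1 - Fmax^2) :=
    mul_nonneg hppos.le (by nlinarith)
  have hdψ4 : p₀ * p₁ * (1 - (‖qInner ψ₀ ψ₁‖)^2) ≤ 1/4 := by
    nlinarith [sq_nonneg (‖qInner ψ₀ ψ₁‖)]
  have hdle : p₀ * p₁ * (1 - Fmax^2)
      ≤ p₀ * p₁ * (1 - (‖qInner ψ₀ ψ₁‖)^2) := by
    have h2 : (‖qInner ψ₀ ψ₁‖)^2 ≤ Fmax^2 := pow_le_pow_left₀ hFψnn hψ 2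
    nlinarith
  constructor
  · rcases lt_or_eq_of_le hdle with h | h
    · exact (entd_strictMono' hdφ0 h hdψ4).le
    · rw [h]
  · constructor
    · intro heq
      by_contra hne
      have hlt : ‖qInner ψ₀ ψ₁‖ < Fmax := lt_of_le_of_ne hψ hne
      have hd : p₀ * p₁ * (1 - Fmax^2)
          < p₀ * p₁ * (1 - (‖qInner ψ₀ ψ₁‖)^2) := by
        have h2 : (‖qInner ψ₀ ψ₁‖)^2 < Fmax^2 :=
          pow_lt_pow_left₀ hlt hFψnn two_ne_zero
        nlinarith
      have := entd_strictMono' hdφ0 hd hdψ4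
      linarith [heq.le, heq.ge]
    · intro heq
      rw [heq]
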